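/- Let Δ, k, l be natural numbers, K ∈ {0,1}, c ∈ ℤ, and z ∈ ℂ with z ≠ 0, and assume Δ < K + k < Δ + l. Work in the field F((q)) of formal Laurent series in q over the field F = ℂ(X, Y) of rational functions in two variables, and for n ∈ ℤ set gₙ = q^{n(K+k−Δ)} · Y^{n(K−1−c)} · Xᵏ · (qⁿX − z)^{−l}, the inverse taken in this field. Then for every n ∈ ℤ the q-adic order of gₙ is at least |n|; consequently the family (gₙ)_{n∈ℤ} is summable in the q-adic topology and the sum ∑_{n∈ℤ} gₙ involves no negative powers of q. In particular, if l ≥ 2 then the choices (K,k) = (0, Δ+1) and (K,k) = (1, Δ) always satisfy the hypothesis. -/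

import Mathlib

open scoped Classical

set_option maxSynthPendingDepth 2

/-- The field `F = ℂ(X,Y)` of rational functions in two variables, realized as `ℂ(X)(Y)`. -/
abbrev FXY : Type := RatFunc (RatFunc ℂ)

/-- The variable `q` of the field `F((q))` of formal Laurent series over `F = ℂ(X,Y)`. -/
noncomputable def qvar : LaurentSeries FXY :=
  HahnSeries.single (1 : ℤ) (1 : FXY)

/-- The variable `X` of `ℂ(X,Y)`, viewed as a constant Laurent series in `q`. -/
noncomputable def Xvar : LaurentSeries FXY :=
  HahnSeries.C (RatFunc.C (RatFunc.X : RatFunc ℂ))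

/-- The variable `Y` of `ℂ(X,Y)`, viewed as a constant Laurent series in `q`. -/
noncomputable def Yvar : LaurentSeries FXY :=
  HahnSeries.C (RatFunc.X : FXY)

/-- A constant `z ∈ ℂ`, viewed as an element of `F((q))`. -/
noncomputable def zconst (z : ℂ) : LaurentSeries FXY :=
  HahnSeries.C (RatFunc.C (RatFunc.C z))

/-- The family `gₙ = q^{n(K+k−Δ)}·Y^{n(K−1−c)}·Xᵏ·(qⁿX − z)^{−l}` in the field `F((q))`. -/
noncomputable def gfam (Δ k l K : ℕ) (c : ℤ) (z : ℂ) (n : ℤ) : LaurentSeries FXY :=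
  qvar ^ (n * ((K : ℤ) + (k : ℤ) - (Δ : ℤ))) * Yvar ^ (n * ((K : ℤ) - 1 - c)) *
    Xvar ^ k * (qvar ^ n * Xvar - zconst z) ^ (-(l : ℤ))

/-! ### Auxiliary lemmas -/

lemma inv_ne_zero' {x : LaurentSeries FXY} (hx : x ≠ 0) : x⁻¹ ≠ 0 :=
  inv_ne_zero (G₀ := LaurentSeries FXY) hx

lemma zpow_ne_zero' {x : LaurentSeries FXY} (hx : x ≠ 0) (m : ℤ) : x ^ m ≠ 0 :=
  zpow_ne_zero (G₀ := LaurentSeries FXY) m hx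

lemma order_inv_aux {x : LaurentSeries FXY} (hx : x ≠ 0) : (x⁻¹).order = -x.order := by
  have h := HahnSeries.order_mul (x := x) (y := x⁻¹) hx (inv_ne_zero' hx)
  rw [show x * x⁻¹ = 1 from mul_inv_cancel₀ (G₀ := LaurentSeries FXY) hx, HahnSeries.order_one] at h
  linarith

lemma order_zpow_aux {x : LaurentSeries FXY} (hx : x ≠ 0) (m : ℤ) :
    (x ^ m).order = m * x.order := by
  cases m with
  | ofNat n =>
    rw [Int.ofNat_eq_coe, zpow_natCast, HahnSeries.order_pow, nsmul_eq_mul]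
  | negSucc n =>
    rw [zpow_negSucc, order_inv_aux (pow_ne_zero _ hx), HahnSeries.order_pow,
      nsmul_eq_mul, Int.negSucc_eq]
    push_cast
    ring

lemma qvar_zpow (m : ℤ) : qvar ^ m = HahnSeries.single m (1 : FXY) := by
  rw [qvar, ← RatFunc.single_zpow]

lemma qvar_zpow_order (m : ℤ) : (qvar ^ m).order = m := by
  rw [qvar_zpow]; exact HahnSeries.order_single one_ne_zero

lemma qvar_zpow_ne (m : ℤ) : qvar ^ m ≠ 0 := by
  rw [qvar_zpow]; exact HahnSeries.single_ne_zero one_ne_zero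

lemma Xprim_ne : (RatFunc.C (RatFunc.X : RatFunc ℂ) : FXY) ≠ 0 := by
  simp [RatFunc.X_ne_zero]

lemma zprim_ne {z : ℂ} (hz : z ≠ 0) : (RatFunc.C (RatFunc.C z) : FXY) ≠ 0 := by
  simp [hz]

lemma Xz_ne {z : ℂ} :
    (RatFunc.C (RatFunc.X : RatFunc ℂ) : FXY) - RatFunc.C (RatFunc.C z) ≠ 0 := by
  have h2 : (RatFunc.X : RatFunc ℂ) ≠ RatFunc.C z := by
    rw [← RatFunc.algebraMap_X, ← RatFunc.algebraMap_C]
    exact fun h => Polynomial.X_ne_C z (RatFunc.algebraMap_injective ℂ h)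
  have hCinj : Function.Injective (RatFunc.C : RatFunc ℂ →+* FXY) :=
    RingHom.injective (RatFunc.C : RatFunc ℂ →+* FXY)
  intro h
  rw [sub_eq_zero] at h
  exact h2 (hCinj h)

/-- The series `qⁿ·X − z` written as a difference of single terms. -/
lemma wform (z : ℂ) (n : ℤ) :
    qvar ^ n * Xvar - zconst z =
      HahnSeries.single n (RatFunc.C (RatFunc.X : RatFunc ℂ) : FXY) -
      HahnSeries.single 0 (RatFunc.C (RatFunc.C z) : FXY) := by
  rw [qvar_zpow, Xvar, zconst, HahnSeries.C_apply, HahnSeries.C_apply,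
    HahnSeries.single_mul_single, add_zero, one_mul]

lemma wcoeff (z : ℂ) (n d : ℤ) :
    (qvar ^ n * Xvar - zconst z).coeff d =
      (if d = n then (RatFunc.C (RatFunc.X : RatFunc ℂ) : FXY) else 0) -
      (if d = 0 then (RatFunc.C (RatFunc.C z) : FXY) else 0) := by
  rw [wform, HahnSeries.coeff_sub, HahnSeries.coeff_single, HahnSeries.coeff_single]
  congr

lemma w_ne {z : ℂ} (hz : z ≠ 0) (n : ℤ) : qvar ^ n * Xvar - zconst z ≠ 0 := by
  intro h
  have h0 := congrArg (fun x => HahnSeries.coeff x (min n 0)) h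
  simp only [HahnSeries.coeff_zero] at h0
  rw [wcoeff] at h0
  rcases lt_trichotomy n 0 with hn | hn | hn
  · rw [min_eq_left hn.le, if_pos rfl, if_neg hn.ne] at h0
    exact Xprim_ne (by simpa using h0)
  · subst hn
    simp only [min_self, if_pos rfl] at h0
    exact Xz_ne h0
  · rw [min_eq_right hn.le, if_neg hn.ne, if_pos rfl] at h0
    exact zprim_ne hz (by simpa using h0)

lemma w_order {z : ℂ} (hz : z ≠ 0) (n : ℤ) :
    (qvar ^ n * Xvar - zconst z).order = min n 0 := by
  apply le_antisymm
  · apply HahnSeries.order_le_of_coeff_ne_zero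
    rw [wcoeff]
    rcases lt_trichotomy n 0 with hn | hn | hn
    · rw [min_eq_left hn.le, if_pos rfl, if_neg hn.ne]
      simpa using Xprim_ne
    · subst hn
      simp only [min_self, if_pos rfl]
      exact Xz_ne
    · rw [min_eq_right hn.le, if_neg hn.ne, if_pos rfl]
      simpa using zprim_ne hz
  · by_contra hc
    push_neg at hc
    have h1 := HahnSeries.coeff_order_eq_zero.not.mpr (w_ne hz n)
    apply h1
    rw [wcoeff]
    have hx : (qvar ^ n * Xvar - zconst z).order ≠ n := by
      intro h; rw [h] at hc; omega
    have hy : (qvar ^ n * Xvar - zconst z).order ≠ 0 := by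
      intro h; rw [h] at hc; omega
    rw [if_neg hx, if_neg hy, sub_zero]

lemma gfam_order (Δ k l K : ℕ) (c : ℤ) {z : ℂ} (hz : z ≠ 0) (n : ℤ) :
    (gfam Δ k l K c z n).order =
      n * ((K : ℤ) + (k : ℤ) - (Δ : ℤ)) - (l : ℤ) * min n 0 := by
  have hYne : Yvar ≠ 0 := by
    rw [Yvar]; exact HahnSeries.single_ne_zero RatFunc.X_ne_zero
  have hXne : Xvar ≠ 0 := by
    rw [Xvar]; exact HahnSeries.single_ne_zero Xprim_ne
  have hq := qvar_zpow_ne (n * ((K : ℤ) + (k : ℤ) - (Δ : ℤ)))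
  have hYp : Yvar ^ (n * ((K : ℤ) - 1 - c)) ≠ 0 := zpow_ne_zero' hYne _
  have hXp : Xvar ^ k ≠ 0 := pow_ne_zero _ hXne
  have hwp : (qvar ^ n * Xvar - zconst z) ^ (-(l : ℤ)) ≠ 0 :=
    zpow_ne_zero' (w_ne hz n) _
  have hYo : Yvar.order = 0 := HahnSeries.order_single RatFunc.X_ne_zero
  have hXo : Xvar.order = 0 := HahnSeries.order_single Xprim_ne
  rw [gfam, HahnSeries.order_mul (mul_ne_zero (mul_ne_zero hq hYp) hXp) hwp,
    HahnSeries.order_mul (mul_ne_zero hq hYp) hXp,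
    HahnSeries.order_mul hq hYp, qvar_zpow_order,
    order_zpow_aux hYne, order_zpow_aux (w_ne hz n), w_order hz,
    HahnSeries.order_pow, hYo, hXo]
  ring

/-- Let `Δ, k, l ∈ ℕ`, `K ∈ {0,1}`, `c ∈ ℤ`, `z ≠ 0`, and assume `Δ < K + k < Δ + l`.
Then each `gₙ` has `q`-adic order at least `|n|`; consequently the family `(gₙ)` is
summable in the `q`-adic topology and its sum has no negative powers of `q`. In particular
if `l ≥ 2` then `(K,k) = (0, Δ+1)` and `(K,k) = (1, Δ)` always satisfy the hypothesis. -/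
theorem cuspidal_expansion_super (Δ k l K : ℕ) (hK : K = 0 ∨ K = 1) (c : ℤ)
    (z : ℂ) (hz : z ≠ 0) (h1 : Δ < K + k) (h2 : K + k < Δ + l) :
    (∀ n : ℤ, |n| ≤ (gfam Δ k l K c z n).order) ∧
    (∀ d : ℤ, {n : ℤ | (gfam Δ k l K c z n).coeff d ≠ 0}.Finite) ∧
    (∃ F : HahnSeries.SummableFamily ℤ FXY ℤ,
      (∀ n : ℤ, F n = gfam Δ k l K c z n) ∧ ∀ d : ℤ, d < 0 → F.hsum.coeff d = 0) ∧
    (2 ≤ l → (Δ < 0 + (Δ + 1) ∧ 0 + (Δ + 1) < Δ + l) ∧ (Δ < 1 + Δ ∧ 1 + Δ < Δ + l)) := by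
  have he1 : 1 ≤ (K : ℤ) + (k : ℤ) - (Δ : ℤ) := by omega
  have he2 : (K : ℤ) + (k : ℤ) - (Δ : ℤ) ≤ (l : ℤ) - 1 := by omega
  set e : ℤ := (K : ℤ) + (k : ℤ) - (Δ : ℤ) with he
  have part1 : ∀ n : ℤ, |n| ≤ (gfam Δ k l K c z n).order := by
    intro n
    rw [gfam_order Δ k l K c hz n, ← he]
    rcases le_or_gt 0 n with hn | hn
    · rw [min_eq_right hn, mul_zero, sub_zero, abs_of_nonneg hn]
      nlinarith
    · rw [min_eq_left hn.le, abs_of_neg hn]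
      nlinarith [mul_nonneg (by linarith : (0:ℤ) ≤ -n) (by linarith : (0:ℤ) ≤ (l:ℤ) - e - 1)]
  have part2 : ∀ d : ℤ, {n : ℤ | (gfam Δ k l K c z n).coeff d ≠ 0}.Finite := by
    intro d
    apply Set.Finite.subset (Set.finite_Icc (-d) d)
    intro n hn
    have hle : (gfam Δ k l K c z n).order ≤ d :=
      le_of_not_gt fun hlt => hn (HahnSeries.coeff_eq_zero_of_lt_order hlt)
    have habs : |n| ≤ d := le_trans (part1 n) hle
    rw [abs_le] at habs
    simp only [Set.mem_Icc]
    exact habs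
  refine ⟨part1, part2, ?_, by omega⟩
  refine ⟨⟨gfam Δ k l K c z, ?_, part2⟩, fun n => rfl, ?_⟩
  · apply Set.IsPWO.mono (Set.isPWO_iff_isWF.mpr (bddBelow_Ici.wellFoundedOn_lt))
    · intro d hd
      simp only [Set.mem_iUnion, HahnSeries.mem_support] at hd
      obtain ⟨n, hn⟩ := hd
      have hle : (gfam Δ k l K c z n).order ≤ d :=
        le_of_not_gt fun hlt => hn (HahnSeries.coeff_eq_zero_of_lt_order hlt)
      exact Set.mem_Ici.mpr (le_trans (le_trans (abs_nonneg n) (part1 n)) hle)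
  · intro d hd
    rw [HahnSeries.SummableFamily.coeff_hsum]
    apply finsum_eq_zero_of_forall_eq_zero
    intro n
    exact HahnSeries.coeff_eq_zero_of_lt_order
      (lt_of_lt_of_le hd (le_trans (abs_nonneg n) (part1 n)))
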